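/- Let S* = S₁* ⊎ S₂* be an optimal assortment under the SML with optimal revenue R*. Then for every nonempty subset Z of S₁* and every nonempty subset Z of S₂*, the utility-weighted average revenue satisfies α(Z) ≥ R*. -/

import Mathlib

open Finset

/-- Total utility of an assortment. -/
noncomputable def Utot {ι : Type*} (u : ι → ℝ) (S : Finset ι) : ℝ := ∑ x ∈ S, u x

/-- Utility-weighted average revenue α(S). -/
noncomputable def alphaRev {ι : Type*} (u r : ι → ℝ) (S : Finset ι) : ℝ :=
  (∑ x ∈ S, u x * r x) / Utot u S

/-- Expected revenue of the assortment S = S₁ ⊎ S₂ under the Sequential MNL: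
R(S) = α(S₁)U(S₁)/(U(S)+u₀) + (α(S₂)U(S₂)/(U(S)+u₀))·(1 − U(S₁)/(U(S)+u₀)). -/
noncomputable def RevSML {ι : Type*} [DecidableEq ι] (u r : ι → ℝ) (u0 : ℝ)
    (S1 S2 : Finset ι) : ℝ :=
  alphaRev u r S1 * Utot u S1 / (Utot u (S1 ∪ S2) + u0) +
    alphaRev u r S2 * Utot u S2 / (Utot u (S1 ∪ S2) + u0) *
      (1 - Utot u S1 / (Utot u (S1 ∪ S2) + u0))

/-- Algebraic step: optimality vs. (∅, S₂) yields B·U₁ ≤ A·D. -/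
lemma sml_case0 (A B U1 U2 u0 : ℝ) (hu0 : 0 < u0) (hU1 : 0 ≤ U1) (hU2 : 0 ≤ U2)
    (hA : 0 ≤ A) (hB : 0 ≤ B)
    (key : B * (U2 + u0) * (U1 + U2 + u0)^2
      ≤ (A * (U1 + U2 + u0) + B * (U2 + u0)) * (U2 + u0)^2) :
    B * U1 ≤ A * (U1 + U2 + u0) := by
  have hE : 0 < U2 + u0 := by linarith
  have hD : 0 < U1 + U2 + u0 := by linarith
  have h1 : B * (U1 + U2 + u0)^2 ≤ A * (U1 + U2 + u0) * (U2 + u0) + B * (U2 + u0)^2 := by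
    nlinarith [key, hE, mul_pos hE hD]
  have h2 : B * U1 * ((U1 + U2 + u0) + (U2 + u0)) ≤ A * (U1 + U2 + u0) * (U2 + u0) := by
    nlinarith [h1]
  nlinarith [h2, mul_nonneg (mul_nonneg hA hD.le) hU1, mul_nonneg hA hD.le, hE]

/-- Algebraic step for a subset of S₁. -/
lemma sml_case1 (A a B U1 U2 w u0 : ℝ) (hu0 : 0 < u0) (hU2 : 0 ≤ U2) (hB : 0 ≤ B)
    (hw : 0 < w) (hwU1 : w ≤ U1)
    (key : ((A - a) * (U1 - w + U2 + u0) + B * (U2 + u0)) * (U1 + U2 + u0)^2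
      ≤ (A * (U1 + U2 + u0) + B * (U2 + u0)) * (U1 - w + U2 + u0)^2) :
    (A * (U1 + U2 + u0) + B * (U2 + u0)) * w ≤ a * (U1 + U2 + u0)^2 := by
  have hD : 0 < U1 + U2 + u0 := by linarith
  have hDw : 0 < U1 - w + U2 + u0 := by linarith
  have hstep : (A * (U1 + U2 + u0) + B * (U2 + u0)) * w * (U1 - w + U2 + u0)
      ≤ a * (U1 + U2 + u0)^2 * (U1 - w + U2 + u0) := by
    nlinarith [key,
      mul_nonneg (mul_nonneg (mul_nonneg hB (by linarith : (0:ℝ) ≤ U2 + u0)) hw.le) hD.le]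
  exact le_of_mul_le_mul_right hstep hDw

/-- Algebraic step for a subset of S₂. -/
lemma sml_case2 (A a B U1 U2 w u0 : ℝ) (hu0 : 0 < u0) (hU1 : 0 ≤ U1)
    (hw : 0 < w) (hwU2 : w ≤ U2)
    (hBU1 : B * U1 ≤ A * (U1 + U2 + u0))
    (key : (A * (U1 + (U2 - w) + u0) + (B - a) * (U2 - w + u0)) * (U1 + U2 + u0)^2
      ≤ (A * (U1 + U2 + u0) + B * (U2 + u0)) * (U1 + (U2 - w) + u0)^2) :
    (A * (U1 + U2 + u0) + B * (U2 + u0)) * w ≤ a * (U1 + U2 + u0)^2 := by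
  have hD : 0 < U1 + U2 + u0 := by linarith
  have hEw : 0 < U2 - w + u0 := by linarith
  have hstep : (A * (U1 + U2 + u0) + B * (U2 + u0)) * w * (U2 - w + u0)
      ≤ a * (U1 + U2 + u0)^2 * (U2 - w + u0) := by
    nlinarith [key, mul_nonneg (mul_nonneg hw.le hU1) (sub_nonneg.2 hBU1)]
  exact le_of_mul_le_mul_right hstep hEw

/-- Closed-form expression for `RevSML`. -/
lemma revEq_aux {ι : Type*} [DecidableEq ι] (u r : ι → ℝ) (u0 : ℝ) (S1 S2 : Finset ι)
    (h12 : Disjoint S1 S2)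
    (h1 : Utot u S1 = 0 → ∑ x ∈ S1, u x * r x = 0)
    (h2 : Utot u S2 = 0 → ∑ x ∈ S2, u x * r x = 0)
    (hD : Utot u S1 + Utot u S2 + u0 ≠ 0) :
    RevSML u r u0 S1 S2 =
      ((∑ x ∈ S1, u x * r x) * (Utot u S1 + Utot u S2 + u0) +
        (∑ x ∈ S2, u x * r x) * (Utot u S2 + u0)) /
        (Utot u S1 + Utot u S2 + u0)^2 := by
  have hU : Utot u (S1 ∪ S2) = Utot u S1 + Utot u S2 := Finset.sum_union h12
  unfold RevSML alphaRev
  rw [hU]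
  rcases eq_or_ne (Utot u S1) 0 with h | h
  · rcases eq_or_ne (Utot u S2) 0 with h' | h'
    · rw [h1 h, h2 h', h, h']; simp
    · have hne : Utot u S2 + u0 ≠ 0 := by rw [h, zero_add] at hD; exact hD
      rw [h1 h, h]; simp only [zero_add, zero_mul, zero_div, sub_zero, mul_one]; field_simp
  · rcases eq_or_ne (Utot u S2) 0 with h' | h'
    · have hne : Utot u S1 + u0 ≠ 0 := by
        intro hc; apply hD; rw [h', add_zero] at *; linarith
      rw [h2 h', h']; simp only [add_zero, zero_add, zero_mul, zero_div, div_zero, sub_zero, mul_one, mul_zero]; field_simp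
    · field_simp; ring

/-- In every optimal assortment S* = S₁* ⊎ S₂*, every nonempty subset Z of S₁* and
every nonempty subset Z of S₂* satisfies α(Z) ≥ R*. -/
theorem stmt9 {ι : Type*} [DecidableEq ι] (u r : ι → ℝ) (u0 : ℝ)
    (X1 X2 S1 S2 : Finset ι)
    (hu : ∀ x ∈ X1 ∪ X2, 0 < u x) (hr : ∀ x, 0 ≤ r x) (hu0 : 0 < u0)
    (hX : Disjoint X1 X2) (hS1 : S1 ⊆ X1) (hS2 : S2 ⊆ X2)
    (hopt : ∀ T1 T2 : Finset ι, T1 ⊆ X1 → T2 ⊆ X2 →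
      RevSML u r u0 T1 T2 ≤ RevSML u r u0 S1 S2) :
    (∀ Z ⊆ S1, Z.Nonempty → RevSML u r u0 S1 S2 ≤ alphaRev u r Z) ∧
    (∀ Z ⊆ S2, Z.Nonempty → RevSML u r u0 S1 S2 ≤ alphaRev u r Z) := by
  classical
  have hd12 : Disjoint S1 S2 := hX.mono hS1 hS2
  have hpos : ∀ S : Finset ι, S ⊆ X1 ∪ X2 → S.Nonempty → 0 < Utot u S := fun S hS hne =>
    Finset.sum_pos (fun x hx => hu x (hS hx)) hne
  have huSnn : ∀ S : Finset ι, S ⊆ X1 ∪ X2 → 0 ≤ Utot u S := fun S hS =>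
    Finset.sum_nonneg fun x hx => (hu x (hS hx)).le
  have hzero : ∀ S : Finset ι, S ⊆ X1 ∪ X2 → Utot u S = 0 → ∑ x ∈ S, u x * r x = 0 := by
    intro S hS h0
    rcases S.eq_empty_or_nonempty with rfl | hne
    · simp
    · exact absurd h0 (hpos S hS hne).ne'
  have hsubnn : ∀ S : Finset ι, S ⊆ X1 ∪ X2 → 0 ≤ ∑ x ∈ S, u x * r x := fun S hS =>
    Finset.sum_nonneg fun x hx => mul_nonneg (hu x (hS hx)).le (hr x)
  have hS1X : S1 ⊆ X1 ∪ X2 := hS1.trans subset_union_left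
  have hS2X : S2 ⊆ X1 ∪ X2 := hS2.trans subset_union_right
  have hU1nn : 0 ≤ Utot u S1 := huSnn S1 hS1X
  have hU2nn : 0 ≤ Utot u S2 := huSnn S2 hS2X
  have hAnn : 0 ≤ ∑ x ∈ S1, u x * r x := hsubnn S1 hS1X
  have hBnn : 0 ≤ ∑ x ∈ S2, u x * r x := hsubnn S2 hS2X
  have hD : (0:ℝ) < Utot u S1 + Utot u S2 + u0 := by linarith
  have hRS : RevSML u r u0 S1 S2 =
      ((∑ x ∈ S1, u x * r x) * (Utot u S1 + Utot u S2 + u0) +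
        (∑ x ∈ S2, u x * r x) * (Utot u S2 + u0)) / (Utot u S1 + Utot u S2 + u0)^2 :=
    revEq_aux u r u0 S1 S2 hd12 (hzero S1 hS1X) (hzero S2 hS2X) hD.ne'
  -- optimality vs (∅, S2) gives B·U1 ≤ A·D
  have hBU1 : (∑ x ∈ S2, u x * r x) * Utot u S1
      ≤ (∑ x ∈ S1, u x * r x) * (Utot u S1 + Utot u S2 + u0) := by
    have hE0 : Utot u (∅ : Finset ι) = 0 := by simp [Utot]
    have h0 := hopt ∅ S2 (Finset.empty_subset _) hS2
    rw [hRS, revEq_aux u r u0 ∅ S2 (by simp) (fun _ => by simp) (hzero S2 hS2X)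
        (by rw [hE0, zero_add]; positivity)] at h0
    rw [hE0] at h0
    simp only [Finset.sum_empty, zero_mul, zero_add] at h0
    rw [div_le_div_iff₀ (by positivity) (by positivity)] at h0
    exact sml_case0 _ _ _ _ _ hu0 hU1nn hU2nn hAnn hBnn h0
  constructor
  · -- subsets of S1
    intro Z hZ hne
    have hZX : Z ⊆ X1 ∪ X2 := (hZ.trans hS1).trans subset_union_left
    have hw : 0 < Utot u Z := hpos Z hZX hne
    have hsdX : S1 \ Z ⊆ X1 ∪ X2 := (Finset.sdiff_subset.trans hS1).trans subset_union_left
    have hsd : Utot u (S1 \ Z) + Utot u Z = Utot u S1 := Finset.sum_sdiff hZ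
    have hsdr : (∑ x ∈ S1 \ Z, u x * r x) + ∑ x ∈ Z, u x * r x = ∑ x ∈ S1, u x * r x :=
      Finset.sum_sdiff hZ
    have hsdnn : 0 ≤ Utot u (S1 \ Z) := huSnn _ hsdX
    have hwU1 : Utot u Z ≤ Utot u S1 := by linarith
    have hDw : (0:ℝ) < Utot u S1 - Utot u Z + Utot u S2 + u0 := by linarith
    have key := hopt (S1 \ Z) S2 (Finset.sdiff_subset.trans hS1) hS2
    rw [hRS, revEq_aux u r u0 (S1 \ Z) S2 (hd12.mono_left Finset.sdiff_subset)
        (hzero _ hsdX) (hzero S2 hS2X)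
        (by rw [show Utot u (S1 \ Z) = Utot u S1 - Utot u Z from by linarith]; exact hDw.ne')]
      at key
    rw [show Utot u (S1 \ Z) = Utot u S1 - Utot u Z from by linarith,
        show (∑ x ∈ S1 \ Z, u x * r x) = (∑ x ∈ S1, u x * r x) - ∑ x ∈ Z, u x * r x
          from by linarith] at key
    rw [div_le_div_iff₀ (by positivity) (by positivity)] at key
    rw [hRS]
    unfold alphaRev
    rw [div_le_div_iff₀ (by positivity) hw]
    exact sml_case1 _ _ _ _ _ _ _ hu0 hU2nn hBnn hw hwU1 key
  · -- subsets of S2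
    intro Z hZ hne
    have hZX : Z ⊆ X1 ∪ X2 := (hZ.trans hS2).trans subset_union_right
    have hw : 0 < Utot u Z := hpos Z hZX hne
    have hsdX : S2 \ Z ⊆ X1 ∪ X2 := (Finset.sdiff_subset.trans hS2).trans subset_union_right
    have hsd : Utot u (S2 \ Z) + Utot u Z = Utot u S2 := Finset.sum_sdiff hZ
    have hsdr : (∑ x ∈ S2 \ Z, u x * r x) + ∑ x ∈ Z, u x * r x = ∑ x ∈ S2, u x * r x :=
      Finset.sum_sdiff hZ
    have hsdnn : 0 ≤ Utot u (S2 \ Z) := huSnn _ hsdX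
    have hwU2 : Utot u Z ≤ Utot u S2 := by linarith
    have hDw : (0:ℝ) < Utot u S1 + (Utot u S2 - Utot u Z) + u0 := by linarith
    have key := hopt S1 (S2 \ Z) hS1 (Finset.sdiff_subset.trans hS2)
    rw [hRS, revEq_aux u r u0 S1 (S2 \ Z) (hd12.mono_right Finset.sdiff_subset)
        (hzero S1 hS1X) (hzero _ hsdX)
        (by rw [show Utot u (S2 \ Z) = Utot u S2 - Utot u Z from by linarith]; exact hDw.ne')]
      at key
    rw [show Utot u (S2 \ Z) = Utot u S2 - Utot u Z from by linarith,
        show (∑ x ∈ S2 \ Z, u x * r x) = (∑ x ∈ S2, u x * r x) - ∑ x ∈ Z, u x * r x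
          from by linarith] at key
    rw [div_le_div_iff₀ (by positivity) (by positivity)] at key
    rw [hRS]
    unfold alphaRev
    rw [div_le_div_iff₀ (by positivity) hw]
    exact sml_case2 _ _ _ _ _ _ _ hu0 hU1nn hw hwU2 hBU1 key
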